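/- Let L = 2, A ∈ ℝ^{M×N}, y ∈ ℝ^M, ε > 0, and let Q₊ := min_{z ∈ S₊} ‖z‖₁. Let 0 < α ≤ exp(−1/2 − (Q₊² + N e^{−1})/(2ε)). Suppose x : [0,∞) → ℝ^N is differentiable, satisfies the reduced gradient flow x'(t) = −[Aᵀ(A x(t)^{⊙2} − y)] ⊙ x(t) for all t ≥ 0, has x(0) = α·𝟙 (all entries equal to α), and the limit x̃∞ := lim_{t→∞} x(t)^{⊙2} exists. Then ‖x̃∞‖₁ − min_{z ∈ S₊} ‖z‖₁ ≤ ε. -/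

import Mathlib

open Filter Topology Matrix

noncomputable section

/-- The NNLS solution set `S₊ = argmin_{z ≥ 0} ‖Az − y‖₂²`. -/
def nnlsSet {M N : ℕ} (A : Matrix (Fin M) (Fin N) ℝ) (y : Fin M → ℝ) :
    Set (Fin N → ℝ) :=
  {z | (∀ i, 0 ≤ z i) ∧ ∀ w : Fin N → ℝ, (∀ i, 0 ≤ w i) →
    ∑ j, (A.mulVec z j - y j) ^ 2 ≤ ∑ j, (A.mulVec w j - y j) ^ 2}

/-- The reduced gradient flow `x'(t) = −[Aᵀ(A x(t)^{⊙L} − y)] ⊙ x(t)^{⊙(L−1)}` for `t ≥ 0`. -/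
def GradFlow {M N : ℕ} (A : Matrix (Fin M) (Fin N) ℝ) (y : Fin M → ℝ) (L : ℕ)
    (x : ℝ → Fin N → ℝ) : Prop :=
  ∀ t : ℝ, 0 ≤ t → ∀ i : Fin N,
    HasDerivAt (fun s => x s i)
      (-(Matrix.mulVec Aᵀ (A.mulVec (fun j => x t j ^ L) - y) i * x t i ^ (L - 1))) t

lemma auxDot {M N : ℕ} (A : Matrix (Fin M) (Fin N) ℝ) (r : Fin M → ℝ) (c : Fin N → ℝ) :
    ∑ i, c i * Aᵀ.mulVec r i = ∑ j, r j * A.mulVec c j := by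
  simp only [Matrix.mulVec, dotProduct, Matrix.transpose_apply, Finset.mul_sum]
  rw [Finset.sum_comm]
  exact Finset.sum_congr rfl fun j _ => Finset.sum_congr rfl fun i _ => by ring

lemma auxBreg {v u : ℝ} (hv : 0 ≤ v) (hu : 0 < u) :
    0 ≤ v * Real.log v - v * Real.log u - v + u := by
  rcases eq_or_lt_of_le hv with h | h
  · simp only [← h, zero_mul, sub_zero, zero_sub, neg_zero, zero_add]
    exact hu.le
  · have hlog := Real.log_le_sub_one_of_pos (show 0 < u / v by positivity)
    rw [Real.log_div hu.ne' h.ne'] at hlog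
    have h2 := mul_le_mul_of_nonneg_left hlog h.le
    have h3 : v * (u / v) = u := by field_simp
    nlinarith

lemma auxMulLogLeSq {u : ℝ} (hu : 0 ≤ u) : u * Real.log u ≤ u ^ 2 := by
  rcases eq_or_lt_of_le hu with h | h
  · simp [← h]
  · have := Real.log_le_sub_one_of_pos h
    nlinarith

lemma auxNegMulLog {u : ℝ} (hu : 0 ≤ u) : -(u * Real.log u) ≤ Real.exp (-1) := by
  rcases eq_or_lt_of_le hu with h | h
  · simp only [← h, zero_mul, neg_zero]
    exact (Real.exp_pos _).le
  · have hx : (0:ℝ) < u⁻¹ := by positivity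
    have h1 := Real.log_le_sub_one_of_pos (mul_pos hx (Real.exp_pos (-1)))
    rw [Real.log_mul hx.ne' (Real.exp_ne_zero _), Real.log_exp] at h1
    have h2 : Real.log u⁻¹ ≤ u⁻¹ * Real.exp (-1) := by linarith
    have h3 := mul_le_mul_of_nonneg_left h2 hu
    rw [Real.log_inv] at h3
    have h4 : u * (u⁻¹ * Real.exp (-1)) = Real.exp (-1) := by field_simp
    nlinarith

theorem stmt2 {M N : ℕ}
    (A : Matrix (Fin M) (Fin N) ℝ) (y : Fin M → ℝ)
    (ε : ℝ) (hε : 0 < ε)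
    (Qp : ℝ) (hQ : IsLeast ((fun z => ∑ i, |z i|) '' nnlsSet A y) Qp)
    (α : ℝ) (hα0 : 0 < α)
    (hα : α ≤ Real.exp (-(1/2) - (Qp ^ 2 + N * Real.exp (-1)) / (2 * ε)))
    (x : ℝ → Fin N → ℝ) (hinit : x 0 = fun _ => α)
    (hflow : GradFlow A y 2 x)
    (xinf : Fin N → ℝ)
    (hlim : Tendsto (fun t => fun i => x t i ^ 2) atTop (𝓝 xinf)) :
    (∑ i, |xinf i|) - Qp ≤ ε := by
  classical
  obtain ⟨⟨z, hzmem, hzQ⟩, -⟩ := hQ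
  obtain ⟨hznn, hzopt⟩ := hzmem
  have hQp : Qp = ∑ i, z i := by
    rw [← hzQ]; exact Finset.sum_congr rfl fun i _ => abs_of_nonneg (hznn i)
  set g : ℝ → Fin N → ℝ := fun t => Aᵀ.mulVec (A.mulVec (fun j => x t j ^ 2) - y) with hgdef
  have hderiv : ∀ t : ℝ, 0 ≤ t → ∀ i, HasDerivAt (fun s => x s i) (-(g t i * x t i)) t := by
    intro t ht i
    simpa [hgdef] using hflow t ht i
  have hcx : ∀ i, ∀ t : ℝ, 0 ≤ t → ContinuousAt (fun s => x s i) t :=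
    fun i t ht => (hderiv t ht i).continuousAt
  have hcxOn : ∀ i (a b : ℝ), 0 ≤ a → ContinuousOn (fun s => x s i) (Set.Icc a b) :=
    fun i a b ha t ht => (hcx i t (le_trans ha ht.1)).continuousWithinAt
  -- continuity of g
  have hgcOn : ∀ i (T : ℝ), ContinuousOn (fun s => g s i) (Set.Icc 0 T) := by
    intro i T
    simp only [hgdef, Matrix.mulVec, dotProduct, Matrix.transpose_apply, Pi.sub_apply]
    apply continuousOn_finset_sum
    intro j _
    apply ContinuousOn.mul continuousOn_const
    apply ContinuousOn.sub _ continuousOn_const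
    apply continuousOn_finset_sum
    intro k _
    exact ((hcxOn k 0 T le_rfl).pow 2).const_smul (A j k) |>.congr (fun s _ => by simp [smul_eq_mul])
  -- positivity
  have hpos : ∀ t : ℝ, 0 ≤ t → ∀ i, 0 < x t i := by
    intro T hT i
    by_contra hle
    push_neg at hle
    have h0 : x 0 i = α := by rw [hinit]
    have hmem0 : (0:ℝ) ∈ Set.Icc (x T i) (x 0 i) := by rw [h0]; exact ⟨hle, hα0.le⟩
    obtain ⟨T', hT'mem, hzero⟩ := intermediate_value_Icc' hT (hcxOn i 0 T le_rfl) hmem0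
    obtain ⟨hT'0, hT'T⟩ := hT'mem
    obtain ⟨K, hK⟩ := (isCompact_Icc : IsCompact (Set.Icc (0:ℝ) T')).exists_bound_of_continuousOn
      (hgcOn i T')
    have hfd : ∀ s ∈ Set.Ico 0 T', HasDerivWithinAt (fun s => x (T' - s) i)
        (g (T' - s) i * x (T' - s) i) (Set.Ici s) s := by
      intro s hs
      have h1 : 0 ≤ T' - s := by linarith [hs.2]
      have h2 := hderiv (T' - s) h1 i
      have h3 : HasDerivAt (fun u : ℝ => T' - u) (-1) s := (hasDerivAt_id s).const_sub T'
      have h4 := h2.comp s h3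
      have h5 : g (T' - s) i * x (T' - s) i = -(g (T' - s) i * x (T' - s) i) * -1 := by ring
      rw [h5]
      exact h4.hasDerivWithinAt
    have hcf : ContinuousOn (fun s => x (T' - s) i) (Set.Icc 0 T') := by
      apply (hcxOn i 0 T' le_rfl).comp (Continuous.continuousOn (continuous_const.sub continuous_id))
      intro s hs
      simp only [id_eq, Set.mem_Icc, Pi.sub_apply]
      exact ⟨by linarith [hs.2], by linarith [hs.1]⟩
    have hb : ∀ s ∈ Set.Ico 0 T', ‖g (T' - s) i * x (T' - s) i‖ ≤
        K * ‖x (T' - s) i‖ + 0 := by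
      intro s hs
      rw [norm_mul, add_zero]
      have hKs := hK (T' - s) ⟨by linarith [hs.2], by linarith [hs.1]⟩
      exact mul_le_mul_of_nonneg_right hKs (norm_nonneg _)
    have hzero' : x T' i = 0 := hzero
    have h0' : ‖x (T' - 0) i‖ ≤ 0 := by
      rw [sub_zero, hzero']; simp
    have := norm_le_gronwallBound_of_norm_deriv_right_le hcf hfd h0' hb T' ⟨hT'0, le_refl T'⟩
    rw [gronwallBound_ε0_δ0] at this
    rw [sub_self, h0] at this
    have : |α| ≤ 0 := this
    rw [abs_of_pos hα0] at this
    linarith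
  -- limits
  have hu : ∀ i, Tendsto (fun t => x t i ^ 2) atTop (𝓝 (xinf i)) :=
    fun i => tendsto_pi_nhds.mp hlim i
  have hxinf0 : ∀ i, 0 ≤ xinf i :=
    fun i => ge_of_tendsto' (hu i) (fun t => sq_nonneg _)
  have hxl : ∀ i, Tendsto (fun t => x t i) atTop (𝓝 (Real.sqrt (xinf i))) := by
    intro i
    have h1 : Tendsto (fun t => Real.sqrt (x t i ^ 2)) atTop (𝓝 (Real.sqrt (xinf i))) :=
      (Real.continuous_sqrt.tendsto _).comp (hu i)
    apply h1.congr'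
    filter_upwards [eventually_ge_atTop (0:ℝ)] with t ht
    rw [Real.sqrt_sq (hpos t ht i).le]
  have hxs_sq : ∀ i, Real.sqrt (xinf i) ^ 2 = xinf i := fun i => Real.sq_sqrt (hxinf0 i)
  set ginf : Fin N → ℝ := Aᵀ.mulVec (A.mulVec xinf - y) with hginfdef
  have hgl : ∀ i, Tendsto (fun t => g t i) atTop (𝓝 (ginf i)) := by
    intro i
    simp only [hgdef, hginfdef, Matrix.mulVec, dotProduct, Matrix.transpose_apply,
      Pi.sub_apply]
    apply tendsto_finset_sum
    intro j _
    exact (((tendsto_finset_sum _ fun k _ => (hu k).const_mul (A j k)).sub_const (y j)).const_mul _)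
  -- stationarity
  have hstat : ∀ i, ginf i * Real.sqrt (xinf i) = 0 := by
    intro i
    have hd : Tendsto (fun t => -(g t i * x t i)) atTop (𝓝 (-(ginf i * Real.sqrt (xinf i)))) :=
      ((hgl i).mul (hxl i)).neg
    have key : ∀ n : ℕ, ∃ c ∈ Set.Ioo (n:ℝ) ((n:ℝ)+1),
        -(g c i * x c i) = (x ((n:ℝ)+1) i - x (n:ℝ) i) / (((n:ℝ)+1) - (n:ℝ)) := by
      intro n
      exact exists_hasDerivAt_eq_slope (fun s => x s i) (fun s => -(g s i * x s i))
        (by linarith : (n:ℝ) < (n:ℝ)+1)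
        (hcxOn i (n:ℝ) ((n:ℝ)+1) n.cast_nonneg)
        (fun s hs => hderiv s (le_trans n.cast_nonneg hs.1.le) i)
    choose c hc1 hc2 using key
    have hct : Tendsto c atTop atTop :=
      tendsto_atTop_mono (fun n => (hc1 n).1.le) tendsto_natCast_atTop_atTop
    have l1 : Tendsto (fun n => -(g (c n) i * x (c n) i)) atTop
        (𝓝 (-(ginf i * Real.sqrt (xinf i)))) := hd.comp hct
    have l2 : Tendsto (fun n : ℕ => (x ((n:ℝ)+1) i - x (n:ℝ) i) / (((n:ℝ)+1) - (n:ℝ)))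
        atTop (𝓝 0) := by
      have h1 : Tendsto (fun n : ℕ => x ((n:ℝ)+1) i) atTop (𝓝 (Real.sqrt (xinf i))) :=
        (hxl i).comp (tendsto_atTop_add_const_right _ 1 tendsto_natCast_atTop_atTop)
      have h2 : Tendsto (fun n : ℕ => x (n:ℝ) i) atTop (𝓝 (Real.sqrt (xinf i))) :=
        (hxl i).comp tendsto_natCast_atTop_atTop
      have h3 := h1.sub h2
      rw [sub_self] at h3
      apply Tendsto.congr _ h3
      intro n
      rw [show ((n:ℝ)+1) - (n:ℝ) = 1 by ring, div_one]
    have := tendsto_nhds_unique (l1.congr (fun n => hc2 n)) l2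
    linarith [this]
  have hginf_xinf : ∀ i, ginf i * xinf i = 0 := by
    intro i
    have h := hstat i
    rcases mul_eq_zero.mp h with h' | h'
    · rw [h', zero_mul]
    · rw [← hxs_sq i, h']; ring
  -- dual feasibility
  have hdual : ∀ i, xinf i = 0 → 0 ≤ ginf i := by
    intro i hxi0
    by_contra hneg
    push_neg at hneg
    have h2 : ∀ᶠ t in atTop, g t i < ginf i / 2 :=
      (hgl i).eventually (gt_mem_nhds (by linarith : ginf i < ginf i / 2))
    obtain ⟨T, hT⟩ := (h2.and (eventually_ge_atTop (0:ℝ))).exists_forall_of_atTop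
    set T' : ℝ := max T 0 with hT'def
    have hT'0 : (0:ℝ) ≤ T' := le_max_right T 0
    have hmono : StrictMonoOn (fun s => x s i) (Set.Ici T') := by
      apply strictMonoOn_of_hasDerivWithinAt_pos (convex_Ici T')
        (fun t ht => (hcx i t (le_trans hT'0 ht)).continuousWithinAt)
        (f' := fun t => -(g t i * x t i))
      · intro t ht
        rw [interior_Ici] at ht
        exact (hderiv t (le_trans hT'0 ht.le) i).hasDerivWithinAt
      · intro t ht
        rw [interior_Ici] at ht
        have ht0 : 0 ≤ t := le_trans hT'0 ht.le
        have hgt := (hT t (le_trans (le_max_left T 0) ht.le)).1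
        have hxp := hpos t ht0 i
        nlinarith
    have hxTpos : 0 < x T' i := hpos T' hT'0 i
    have hs0 : Real.sqrt (xinf i) = 0 := by rw [hxi0, Real.sqrt_zero]
    have hge : x (T' + 1) i ≤ Real.sqrt (xinf i) := by
      apply ge_of_tendsto (hxl i)
      filter_upwards [eventually_ge_atTop (T' + 1)] with t ht
      exact hmono.monotoneOn (by simp : T' + 1 ∈ Set.Ici T')
        (by simp only [Set.mem_Ici]; linarith : t ∈ Set.Ici T') (by linarith)
    have hlt : x T' i < x (T' + 1) i :=
      hmono (by simp : T' ∈ Set.Ici T') (by simp : T' + 1 ∈ Set.Ici T') (by linarith)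
    rw [hs0] at hge
    linarith
  -- membership of xinf in nnlsSet
  have hgsign : ∀ i, (∀ w : ℝ, 0 ≤ w → 0 ≤ ginf i * w) := by
    intro i w hw
    rcases eq_or_lt_of_le (hxinf0 i) with h | h
    · exact mul_nonneg (hdual i h.symm) hw
    · have : ginf i = 0 := by
        have := hginf_xinf i
        rcases mul_eq_zero.mp this with h' | h'
        · exact h'
        · exact absurd h' (ne_of_gt h)
      rw [this, zero_mul]
  have hmulVec_sub : ∀ (v w : Fin N → ℝ) (j : Fin M),
      A.mulVec (fun i => v i - w i) j = A.mulVec v j - A.mulVec w j := by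
    intro v w j
    simp only [Matrix.mulVec, dotProduct, mul_sub, Finset.sum_sub_distrib]
  have hmem : xinf ∈ nnlsSet A y := by
    refine ⟨hxinf0, ?_⟩
    intro w hw
    have key : ∀ j, (A.mulVec w j - y j)^2 = (A.mulVec xinf j - y j)^2
        + (A.mulVec (fun i => w i - xinf i) j)^2
        + 2 * ((A.mulVec xinf j - y j) * (A.mulVec (fun i => w i - xinf i) j)) := by
      intro j
      rw [hmulVec_sub w xinf j]; ring
    have hcross : ∑ j, (A.mulVec xinf j - y j) * A.mulVec (fun i => w i - xinf i) j
        = ∑ i, (w i - xinf i) * ginf i := by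
      have := auxDot A (fun j => A.mulVec xinf j - y j) (fun i => w i - xinf i)
      rw [← this]
      apply Finset.sum_congr rfl
      intro i _
      congr 1
    have hcross_nn : 0 ≤ ∑ i, (w i - xinf i) * ginf i := by
      apply Finset.sum_nonneg
      intro i _
      have h1 : 0 ≤ ginf i * w i := hgsign i (w i) (hw i)
      have h2 : ginf i * xinf i = 0 := hginf_xinf i
      nlinarith
    calc ∑ j, (A.mulVec xinf j - y j) ^ 2
        ≤ ∑ j, (A.mulVec xinf j - y j) ^ 2
          + (∑ j, (A.mulVec (fun i => w i - xinf i) j)^2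
            + 2 * ∑ i, (w i - xinf i) * ginf i) := by
          have := Finset.sum_nonneg (fun j (_ : j ∈ Finset.univ) =>
            sq_nonneg (A.mulVec (fun i => w i - xinf i) j))
          linarith
      _ = ∑ j, (A.mulVec w j - y j) ^ 2 := by
          rw [Finset.sum_congr rfl fun j _ => key j]
          rw [Finset.sum_add_distrib, Finset.sum_add_distrib, ← Finset.mul_sum, hcross]
          ring
  -- A z = A xinf
  have hAz : ∀ j, A.mulVec z j = A.mulVec xinf j := by
    have e1 : ∑ j, (A.mulVec z j - y j)^2 ≤ ∑ j, (A.mulVec xinf j - y j)^2 := hzopt xinf hxinf0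
    have e2 : ∑ j, (A.mulVec xinf j - y j)^2 ≤ ∑ j, (A.mulVec z j - y j)^2 := hmem.2 z hznn
    have hmidnn : ∀ i, 0 ≤ (z i + xinf i)/2 := by
      intro i; have := hznn i; have := hxinf0 i; positivity
    have hmid := hmem.2 (fun i => (z i + xinf i)/2) hmidnn
    have hmv : ∀ j, A.mulVec (fun i => (z i + xinf i)/2) j
        = (A.mulVec z j + A.mulVec xinf j)/2 := by
      intro j
      simp only [Matrix.mulVec, dotProduct]
      rw [Finset.sum_congr rfl (fun i (_ : i ∈ Finset.univ) =>
        show A j i * ((z i + xinf i)/2) = (A j i * z i + A j i * xinf i)/2 from by ring),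
        ← Finset.sum_div, Finset.sum_add_distrib]
    have hmid' : ∑ j, (A.mulVec xinf j - y j)^2
        ≤ ∑ j, ((A.mulVec z j - y j + (A.mulVec xinf j - y j))/2)^2 := by
      refine hmid.trans_eq (Finset.sum_congr rfl fun j _ => ?_)
      rw [hmv j]; ring
    have key : ∑ j, (A.mulVec z j - y j - (A.mulVec xinf j - y j))^2
        = 2*(∑ j, (A.mulVec z j - y j)^2) + 2*(∑ j, (A.mulVec xinf j - y j)^2)
          - 4 * ∑ j, ((A.mulVec z j - y j + (A.mulVec xinf j - y j))/2)^2 := by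
      rw [Finset.mul_sum, Finset.mul_sum, Finset.mul_sum, ← Finset.sum_add_distrib,
        ← Finset.sum_sub_distrib]
      apply Finset.sum_congr rfl
      intro j _
      ring
    have hzsum : ∑ j, (A.mulVec z j - y j - (A.mulVec xinf j - y j))^2 = 0 := by
      have hnn := Finset.sum_nonneg (fun j (_ : j ∈ Finset.univ) =>
        sq_nonneg (A.mulVec z j - y j - (A.mulVec xinf j - y j)))
      linarith
    intro j
    have := (Finset.sum_eq_zero_iff_of_nonneg (fun j (_ : j ∈ Finset.univ) =>
      sq_nonneg (A.mulVec z j - y j - (A.mulVec xinf j - y j)))).mp hzsum j (Finset.mem_univ j)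
    have h2 : A.mulVec z j - y j - (A.mulVec xinf j - y j) = 0 :=
      (pow_eq_zero_iff two_ne_zero).mp this
    linarith
  -- conservation law
  have hmv0 : ∀ (t : ℝ), ∑ i, (z i - xinf i) * g t i = 0 := by
    intro t
    have hd := auxDot A (fun j => A.mulVec (fun k => x t k ^ 2) j - y j) (fun i => z i - xinf i)
    have hL : ∑ i, (z i - xinf i) * g t i
        = ∑ j, (A.mulVec (fun k => x t k ^ 2) j - y j) * A.mulVec (fun i => z i - xinf i) j := by
      rw [← hd]
      apply Finset.sum_congr rfl
      intro i _
      congr 1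
    rw [hL]
    apply Finset.sum_eq_zero
    intro j _
    rw [hmulVec_sub z xinf j, hAz j, sub_self, mul_zero]
  have hcons : ∀ t : ℝ, 0 ≤ t →
      ∑ i, (z i - xinf i) * Real.log (x t i) = ∑ i, (z i - xinf i) * Real.log α := by
    intro T hT
    have key : ∀ t ∈ Set.Icc (0:ℝ) T,
        (fun s => ∑ i, (z i - xinf i) * Real.log (x s i)) t
        = (fun s => ∑ i, (z i - xinf i) * Real.log (x s i)) 0 := by
      apply constant_of_has_deriv_right_zero
      · apply continuousOn_finset_sum
        intro i _
        exact (((hcxOn i 0 T le_rfl).log (fun t ht => (hpos t ht.1 i).ne')).const_smul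
          (z i - xinf i)).congr (fun s _ => by simp [smul_eq_mul])
      · intro t ht
        have ht0 : 0 ≤ t := ht.1
        have hda : HasDerivAt (fun s => ∑ i, (z i - xinf i) * Real.log (x s i))
            (∑ i, (z i - xinf i) * (-(g t i * x t i) / x t i)) t := by
          apply HasDerivAt.fun_sum
          intro i _
          exact ((hderiv t ht0 i).log (hpos t ht0 i).ne').const_mul (z i - xinf i)
        have hz0 : (∑ i, (z i - xinf i) * (-(g t i * x t i) / x t i)) = 0 := by
          have : ∀ i, (z i - xinf i) * (-(g t i * x t i) / x t i)
              = -((z i - xinf i) * g t i) := by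
            intro i
            have hx := (hpos t ht0 i).ne'
            field_simp
          rw [Finset.sum_congr rfl fun i _ => this i, Finset.sum_neg_distrib, hmv0 t, neg_zero]
        rw [hz0] at hda
        exact hda.hasDerivWithinAt
    have h2 := key T ⟨hT, le_refl T⟩
    simp only at h2
    rw [h2]
    apply Finset.sum_congr rfl
    intro i _
    rw [hinit]
  -- final part
  have hgoal_eq : ∑ i, |xinf i| = ∑ i, xinf i :=
    Finset.sum_congr rfl fun i _ => abs_of_nonneg (hxinf0 i)
  set lam := Real.log α with hlamdef
  set S := ∑ i, xinf i with hSdef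
  set A1 := ∑ i, z i * Real.log (z i) with hA1def
  set A2 := ∑ i, xinf i * Real.log (xinf i) with hA2def
  set Cz := A1 - A2 + (S - Qp) + 2*(lam*S) - 2*(lam*Qp) with hCzdef
  have hkey : ∀ t : ℝ, 0 ≤ t →
      0 ≤ (∑ i, (xinf i * Real.log (xinf i) - xinf i * Real.log (x t i ^ 2)
        - xinf i + x t i ^ 2)) + Cz := by
    intro t ht
    have hDz : 0 ≤ ∑ i, (z i * Real.log (z i) - z i * Real.log (x t i ^ 2)
        - z i + x t i ^ 2) :=
      Finset.sum_nonneg fun i _ => auxBreg (hznn i) (pow_pos (hpos t ht i) 2)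
    have hlog2 : ∀ i, Real.log (x t i ^ 2) = 2 * Real.log (x t i) := by
      intro i
      rw [Real.log_pow]
      push_cast
      ring
    have e1 : ∑ i, (z i * Real.log (z i) - z i * Real.log (x t i ^ 2) - z i + x t i ^ 2)
        = A1 - 2 * (∑ i, z i * Real.log (x t i)) - Qp + ∑ i, x t i ^ 2 := by
      rw [Finset.sum_congr rfl (fun i (_ : i ∈ Finset.univ) => show
        z i * Real.log (z i) - z i * Real.log (x t i ^ 2) - z i + x t i ^ 2
        = z i * Real.log (z i) - 2 * (z i * Real.log (x t i)) - z i + x t i ^ 2 from by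
          rw [hlog2 i]; ring)]
      rw [Finset.sum_add_distrib, Finset.sum_sub_distrib, Finset.sum_sub_distrib,
        ← Finset.mul_sum, hQp, hA1def]
    have e2 : ∑ i, (xinf i * Real.log (xinf i) - xinf i * Real.log (x t i ^ 2)
          - xinf i + x t i ^ 2)
        = A2 - 2 * (∑ i, xinf i * Real.log (x t i)) - S + ∑ i, x t i ^ 2 := by
      rw [Finset.sum_congr rfl (fun i (_ : i ∈ Finset.univ) => show
        xinf i * Real.log (xinf i) - xinf i * Real.log (x t i ^ 2) - xinf i + x t i ^ 2
        = xinf i * Real.log (xinf i) - 2 * (xinf i * Real.log (x t i)) - xinf i + x t i ^ 2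
        from by rw [hlog2 i]; ring)]
      rw [Finset.sum_add_distrib, Finset.sum_sub_distrib, Finset.sum_sub_distrib,
        ← Finset.mul_sum, hSdef, hA2def]
    have e3 : (∑ i, z i * Real.log (x t i)) - (∑ i, xinf i * Real.log (x t i))
        = lam * Qp - lam * S := by
      have hc := hcons t ht
      rw [Finset.sum_congr rfl (fun i (_ : i ∈ Finset.univ) => sub_mul (z i) (xinf i)
        (Real.log (x t i))), Finset.sum_sub_distrib] at hc
      rw [Finset.sum_congr rfl (fun i (_ : i ∈ Finset.univ) => sub_mul (z i) (xinf i)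
        (Real.log α)), Finset.sum_sub_distrib, ← Finset.sum_mul, ← Finset.sum_mul] at hc
      rw [hc, ← hQp, ← hSdef, hlamdef]
      ring
    rw [e1] at hDz
    rw [e2, hCzdef]
    linarith
  have hPlim : Tendsto (fun t => ∑ i, (xinf i * Real.log (xinf i)
      - xinf i * Real.log (x t i ^ 2) - xinf i + x t i ^ 2)) atTop (𝓝 0) := by
    have h0 : (0:ℝ) = ∑ _i : Fin N, (0:ℝ) := by simp
    rw [h0]
    apply tendsto_finset_sum
    intro i _
    rcases eq_or_lt_of_le (hxinf0 i) with h | h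
    · have := hu i
      rw [← h] at this ⊢
      simpa using this
    · have l1 : Tendsto (fun t => Real.log (x t i ^ 2)) atTop (𝓝 (Real.log (xinf i))) :=
        ((Real.continuousAt_log h.ne').tendsto).comp (hu i)
      have l2 := ((tendsto_const_nhds (x := xinf i * Real.log (xinf i)) (f := atTop)).sub
        (l1.const_mul (xinf i))).sub (tendsto_const_nhds (x := xinf i)) |>.add (hu i)
      convert l2 using 2
      ring
  have hC0 : 0 ≤ Cz := by
    have hev : ∀ᶠ t in atTop, 0 ≤ (∑ i, (xinf i * Real.log (xinf i)
        - xinf i * Real.log (x t i ^ 2) - xinf i + x t i ^ 2)) + Cz := by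
      filter_upwards [eventually_ge_atTop (0:ℝ)] with t ht
      exact hkey t ht
    have := ge_of_tendsto (hPlim.add_const Cz) hev
    simpa using this
  -- bounds on A1 and A2
  have hA1b : A1 ≤ Qp ^ 2 := by
    rw [hA1def, hQp]
    calc ∑ i, z i * Real.log (z i) ≤ ∑ i, (z i) ^ 2 :=
          Finset.sum_le_sum fun i _ => auxMulLogLeSq (hznn i)
      _ ≤ (∑ i, z i) ^ 2 := by
          have h1 : ∀ i ∈ Finset.univ, (z i : ℝ) ^ 2 ≤ z i * ∑ j, z j := by
            intro i _
            rw [sq]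
            exact mul_le_mul_of_nonneg_left
              (Finset.single_le_sum (fun j _ => hznn j) (Finset.mem_univ i)) (hznn i)
          calc ∑ i, (z i)^2 ≤ ∑ i, z i * ∑ j, z j := Finset.sum_le_sum h1
            _ = (∑ i, z i) ^ 2 := by rw [← Finset.sum_mul, sq]
  have hA2b : -A2 ≤ N * Real.exp (-1) := by
    rw [hA2def, ← Finset.sum_neg_distrib]
    calc ∑ i, -(xinf i * Real.log (xinf i)) ≤ ∑ _i : Fin N, Real.exp (-1) :=
          Finset.sum_le_sum fun i _ => auxNegMulLog (hxinf0 i)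
      _ = N * Real.exp (-1) := by
          rw [Finset.sum_const, Finset.card_univ, Fintype.card_fin, nsmul_eq_mul]
  -- conclude
  rw [hgoal_eq]
  rcases Nat.eq_zero_or_pos N with hN | hN
  · subst hN
    have hS0 : S = 0 := by rw [hSdef]; simp
    have hQ0 : Qp = 0 := by rw [hQp]; simp
    rw [hS0, hQ0]
    simpa using hε.le
  · have hcpos : (0:ℝ) < Qp ^ 2 + N * Real.exp (-1) := by
      have h1 : (1:ℝ) ≤ N := by exact_mod_cast hN
      have h2 := Real.exp_pos (-1)
      nlinarith [sq_nonneg Qp]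
    have hlam_le : lam ≤ -(1/2) - (Qp ^ 2 + N * Real.exp (-1)) / (2 * ε) := by
      rw [hlamdef]
      calc Real.log α ≤ Real.log (Real.exp (-(1/2) - (Qp ^ 2 + N * Real.exp (-1)) / (2 * ε))) :=
            (Real.log_le_log_iff hα0 (Real.exp_pos _)).mpr hα
        _ = -(1/2) - (Qp ^ 2 + N * Real.exp (-1)) / (2 * ε) := Real.log_exp _
    have hediv : 2 * ε * ((Qp ^ 2 + N * Real.exp (-1)) / (2 * ε)) = Qp ^ 2 + N * Real.exp (-1) := by
      field_simp
    have hlam2 : (Qp ^ 2 + N * Real.exp (-1)) ≤ ε * (-1 - 2 * lam) := by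
      have h3 := mul_le_mul_of_nonneg_left hlam_le (by linarith : (0:ℝ) ≤ 2 * ε)
      nlinarith [h3, hediv]
    have hfac : 0 < -1 - 2 * lam := by
      nlinarith [hlam2, hcpos, hε]
    have hmain : (-1 - 2 * lam) * (S - Qp) ≤ Qp ^ 2 + N * Real.exp (-1) := by
      rw [hCzdef] at hC0
      linarith [hC0, hA1b, hA2b]
    have hfin : (-1 - 2 * lam) * (S - Qp) ≤ (-1 - 2 * lam) * ε := by
      calc (-1 - 2 * lam) * (S - Qp) ≤ Qp ^ 2 + N * Real.exp (-1) := hmain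
        _ ≤ ε * (-1 - 2 * lam) := hlam2
        _ = (-1 - 2 * lam) * ε := by ring
    exact le_of_mul_le_mul_left hfin hfac
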